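/- (Block-diagonal case, bound (4.15)) Let M be a 0–1 matrix whose rows are split into a top group of m₁ rows and a bottom group of m₂ rows, and whose columns are split into a left group of n₁ columns and a right group of n₂ columns (m₁, m₂, n₁, n₂ ≥ 1). Suppose every top row has all its ones in the left columns with density at least δ₁ ∈ (0,1) there, and every bottom row has all its ones in the right columns with density at least δ₄ ∈ (0,1) there. If k₁ ≤ n₁ and k₂ ≤ n₂ are natural numbers with k₁ > (log m₁)/|log(1−δ₁)| and k₂ > (log m₂)/|log(1−δ₄)|, then there exist a set J₁ of left columns with |J₁| = k₁ and a set J₂ of right columns with |J₂| = k₂ such that J₁ ∪ J₂ covers every row of M. -/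

import Mathlib

open Finset

lemma choose_mul_pow_le {a n : ℕ} (h : a ≤ n) (k : ℕ) :
    a.choose k * n ^ k ≤ n.choose k * a ^ k := by
  induction k with
  | zero => simp
  | succ k ih =>
    have hk1 : 0 < k + 1 := Nat.succ_pos k
    apply Nat.le_of_mul_le_mul_right _ hk1
    have h1 : a.choose (k+1) * (k+1) = a.choose k * (a - k) := Nat.choose_succ_right_eq a k
    have h2 : n.choose (k+1) * (k+1) = n.choose k * (n - k) := Nat.choose_succ_right_eq n k
    have h3 : (a - k) * n ≤ (n - k) * a := by
      rw [Nat.sub_mul, Nat.sub_mul, mul_comm n a]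
      exact Nat.sub_le_sub_left (Nat.mul_le_mul_left k h) (a * n)
    calc a.choose (k+1) * n ^ (k+1) * (k+1)
        = (a.choose k * n ^ k) * ((a - k) * n) := by
          rw [pow_succ]; rw [show a.choose (k+1) * (n^k * n) * (k+1)
            = (a.choose (k+1) * (k+1)) * (n^k * n) by ring, h1]; ring
      _ ≤ (n.choose k * a ^ k) * ((n - k) * a) := Nat.mul_le_mul ih h3
      _ = n.choose (k+1) * a ^ (k+1) * (k+1) := by
          rw [pow_succ, show n.choose (k+1) * (a^k * a) * (k+1)
            = (n.choose (k+1) * (k+1)) * (a^k * a) by ring, h2]; ring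

lemma cover_exists {m n : ℕ} (hm : 1 ≤ m) (hn : 1 ≤ n)
    (A : Fin m → Fin n → Bool) (δ : ℝ) (hδ0 : 0 < δ) (hδ1 : δ < 1)
    (hd : ∀ i, δ ≤ ((univ.filter (fun j => A i j = true)).card : ℝ) / (n : ℝ))
    (k : ℕ) (hk : k ≤ n)
    (hklog : (k : ℝ) > Real.log m / (-Real.log (1 - δ))) :
    ∃ J : Finset (Fin n), J.card = k ∧ ∀ i, ∃ j ∈ J, A i j = true := by
  have hnpos : (0:ℝ) < n := by exact_mod_cast hn
  have h1δ0 : (0:ℝ) < 1 - δ := by linarith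
  have h1δ1 : 1 - δ < 1 := by linarith
  have hlogneg : 0 < -Real.log (1 - δ) := by
    have := Real.log_neg h1δ0 h1δ1; linarith
  -- (1-δ)^k < 1/m
  have hmpos : (0:ℝ) < m := by exact_mod_cast hm
  have hpow : (1 - δ) ^ k < 1 / m := by
    have h1 : Real.log m < k * (-Real.log (1 - δ)) := by
      have := (div_lt_iff₀ hlogneg).mp hklog; linarith
    have h2 : Real.log ((1 - δ) ^ k) < Real.log (1 / m) := by
      rw [Real.log_pow, Real.log_div one_ne_zero (ne_of_gt hmpos), Real.log_one]
      push_cast; nlinarith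
    exact (Real.log_lt_log_iff (pow_pos h1δ0 k) (by positivity)).mp h2
  -- main counting
  by_contra hcon
  push_neg at hcon
  set S := (univ : Finset (Fin n)).powersetCard k with hS
  have hsub : S ⊆ univ.biUnion (fun i =>
      (univ.filter (fun j => A i j = true))ᶜ.powersetCard k) := by
    intro J hJ
    rw [mem_powersetCard] at hJ
    obtain ⟨i, hi⟩ := hcon J hJ.2
    simp only [mem_biUnion, mem_univ, true_and]
    refine ⟨i, ?_⟩
    rw [mem_powersetCard]
    refine ⟨fun j hjJ => ?_, hJ.2⟩
    simp only [mem_compl, mem_filter, mem_univ, true_and]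
    intro hAij
    exact absurd hAij (by simpa using fun h => (hi j hjJ) h) 
  have hcardS : S.card = n.choose k := by simp [hS]
  have hcardbad : ∀ i : Fin m,
      ((univ.filter (fun j => A i j = true))ᶜ.powersetCard k).card
        = (n - (univ.filter (fun j => A i j = true)).card).choose k := by
    intro i
    rw [card_powersetCard, card_compl, Fintype.card_fin]
  have hle : S.card ≤ ∑ i : Fin m,
      (n - (univ.filter (fun j => A i j = true)).card).choose k := by
    calc S.card ≤ _ := card_le_card hsub
      _ ≤ ∑ i : Fin m, ((univ.filter (fun j => A i j = true))ᶜ.powersetCard k).card :=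
          card_biUnion_le
      _ = _ := by simp_rw [hcardbad]
  -- real bound on each term
  have hterm : ∀ i : Fin m,
      ((n - (univ.filter (fun j => A i j = true)).card).choose k : ℝ)
        ≤ (n.choose k : ℝ) * (1 - δ) ^ k := by
    intro i
    set d := (univ.filter (fun j => A i j = true)).card with hdd
    have hdn : d ≤ n := by
      calc d ≤ (univ : Finset (Fin n)).card := card_le_card (filter_subset _ _)
        _ = n := by simp
    have hnat := choose_mul_pow_le (Nat.sub_le n d) k
    have hreal : ((n - d).choose k : ℝ) * (n:ℝ) ^ k ≤ (n.choose k : ℝ) * ((n:ℝ) - d) ^ k := by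
      have := (Nat.cast_le (α := ℝ)).mpr hnat
      push_cast [Nat.cast_sub hdn] at this ⊢
      convert this using 2
    have hδd : (n:ℝ) - d ≤ (1 - δ) * n := by
      have := hd i
      rw [le_div_iff₀ hnpos] at this
      rw [← hdd] at this
      nlinarith
    have hnd0 : (0:ℝ) ≤ (n:ℝ) - d := by
      have : (d:ℝ) ≤ n := by exact_mod_cast hdn
      linarith
    calc ((n - d).choose k : ℝ)
        = ((n - d).choose k : ℝ) * (n:ℝ)^k / (n:ℝ)^k := by field_simp
      _ ≤ (n.choose k : ℝ) * ((n:ℝ) - d)^k / (n:ℝ)^k := by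
          apply div_le_div_of_nonneg_right hreal (by positivity) |>.trans_eq rfl
      _ ≤ (n.choose k : ℝ) * ((1 - δ) * n)^k / (n:ℝ)^k := by
          apply div_le_div_of_nonneg_right _ (by positivity)
          exact mul_le_mul_of_nonneg_left (pow_le_pow_left₀ hnd0 hδd k) (by positivity)
      _ = (n.choose k : ℝ) * (1 - δ)^k := by
          rw [mul_pow]; field_simp
  have hchoosepos : (0:ℝ) < n.choose k := by
    exact_mod_cast Nat.choose_pos hk
  have hsum : (∑ i : Fin m,
      ((n - (univ.filter (fun j => A i j = true)).card).choose k : ℝ)) < (n.choose k : ℝ) := by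
    calc (∑ i : Fin m, ((n - (univ.filter (fun j => A i j = true)).card).choose k : ℝ))
        ≤ ∑ _i : Fin m, (n.choose k : ℝ) * (1 - δ)^k := Finset.sum_le_sum (fun i _ => hterm i)
      _ = m * ((n.choose k : ℝ) * (1 - δ)^k) := by simp [mul_comm]
      _ < m * ((n.choose k : ℝ) * (1/m)) := by
          apply mul_lt_mul_of_pos_left _ hmpos
          exact mul_lt_mul_of_pos_left hpow hchoosepos
      _ = (n.choose k : ℝ) := by field_simp
  have hle2 : (S.card : ℝ) ≤ ∑ i : Fin m,
      ((n - (univ.filter (fun j => A i j = true)).card).choose k : ℝ) := by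
    exact_mod_cast hle
  have : (S.card : ℝ) < (n.choose k : ℝ) := lt_of_le_of_lt hle2 hsum
  rw [hcardS] at this
  exact lt_irrefl _ this





/-- **Block-diagonal case (bound (4.15)).** Let `M` be a 0–1 matrix with rows split into
a top group of `m₁` rows and a bottom group of `m₂` rows, and columns split into a left
group of `n₁` columns and a right group of `n₂` columns. Suppose every top row has all
its ones in the left columns with density at least `δ₁ ∈ (0,1)` there, and every bottom
row has all its ones in the right columns with density at least `δ₄ ∈ (0,1)` there.
If `k₁ ≤ n₁`, `k₂ ≤ n₂` satisfy `k₁ > log m₁ / |log(1-δ₁)|` and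
`k₂ > log m₂ / |log(1-δ₄)|`, then there are `J₁`, `J₂` of left resp. right columns with
`|J₁| = k₁`, `|J₂| = k₂` covering every row of `M`. -/
theorem stmt_15 {m₁ m₂ n₁ n₂ : ℕ}
    (hm₁ : 1 ≤ m₁) (hm₂ : 1 ≤ m₂) (hn₁ : 1 ≤ n₁) (hn₂ : 1 ≤ n₂)
    (M : Fin m₁ ⊕ Fin m₂ → Fin n₁ ⊕ Fin n₂ → Bool)
    (δ₁ δ₄ : ℝ) (hδ₁ : 0 < δ₁ ∧ δ₁ < 1) (hδ₄ : 0 < δ₄ ∧ δ₄ < 1)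
    (htop0 : ∀ (i : Fin m₁) (j : Fin n₂), M (Sum.inl i) (Sum.inr j) = false)
    (hbot0 : ∀ (i : Fin m₂) (j : Fin n₁), M (Sum.inr i) (Sum.inl j) = false)
    (htop : ∀ i : Fin m₁,
      δ₁ ≤ ((univ.filter (fun j : Fin n₁ => M (Sum.inl i) (Sum.inl j) = true)).card : ℝ) / (n₁ : ℝ))
    (hbot : ∀ i : Fin m₂,
      δ₄ ≤ ((univ.filter (fun j : Fin n₂ => M (Sum.inr i) (Sum.inr j) = true)).card : ℝ) / (n₂ : ℝ))
    (k₁ k₂ : ℕ) (hk₁ : k₁ ≤ n₁) (hk₂ : k₂ ≤ n₂)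
    (hk₁log : (k₁ : ℝ) > Real.log m₁ / (-Real.log (1 - δ₁)))
    (hk₂log : (k₂ : ℝ) > Real.log m₂ / (-Real.log (1 - δ₄))) :
    ∃ J₁ : Finset (Fin n₁), ∃ J₂ : Finset (Fin n₂),
      J₁.card = k₁ ∧ J₂.card = k₂ ∧
      ∀ i : Fin m₁ ⊕ Fin m₂,
        (∃ j ∈ J₁, M i (Sum.inl j) = true) ∨ (∃ j ∈ J₂, M i (Sum.inr j) = true) := by
  obtain ⟨J₁, hJ₁c, hJ₁⟩ := cover_exists hm₁ hn₁ (fun i j => M (Sum.inl i) (Sum.inl j))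
    δ₁ hδ₁.1 hδ₁.2 htop k₁ hk₁ hk₁log
  obtain ⟨J₂, hJ₂c, hJ₂⟩ := cover_exists hm₂ hn₂ (fun i j => M (Sum.inr i) (Sum.inr j))
    δ₄ hδ₄.1 hδ₄.2 hbot k₂ hk₂ hk₂log
  refine ⟨J₁, J₂, hJ₁c, hJ₂c, fun i => ?_⟩
  cases i with
  | inl i => exact Or.inl (hJ₁ i)
  | inr i => exact Or.inr (hJ₂ i)
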